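/- The system consisting of the flexibility identity A(X,Y,Z) + A(Z,Y,X) = 0 and the identity A(X,Y,Z) + A(Y,Z,X) - A(Y,X,Z) = 0 is equivalent to the single identity 2A(X,Y,Z) + (1/2)A(Y,X,Z) + A(Z,Y,X) + A(Y,Z,X) + (3/2)A(Z,X,Y) = 0, for the associator A of any bilinear multiplication on a vector space over a field of characteristic ≠ 2, 3. -/
import Mathlib


variable {K : Type*} [Field K] {P : Type*} [AddCommGroup P] [Module K P]

/-- The associator of a bilinear multiplication. -/
def assocOf (m : P →ₗ[K] P →ₗ[K] P) (X Y Z : P) : P := m (m X Y) Z - m X (m Y Z)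

/-- Admissible Poisson algebra condition:
`3 A(X,Y,Z) = (X·Z)·Y + (Y·Z)·X - (Y·X)·Z - (Z·X)·Y`. -/
def IsAdmissible (m : P →ₗ[K] P →ₗ[K] P) : Prop :=
  ∀ X Y Z : P, (3 : ℤ) • assocOf m X Y Z =
    m (m X Z) Y + m (m Y Z) X - m (m Y X) Z - m (m Z X) Y

/-- The antisymmetrized bracket `{X,Y} = (X·Y - Y·X)/2`. -/
def brOf (m : P →ₗ[K] P →ₗ[K] P) (X Y : P) : P := (2 : K)⁻¹ • (m X Y - m Y X)

/-- The symmetrized product `X∙Y = (X·Y + Y·X)/2`. -/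
def bulOf (m : P →ₗ[K] P →ₗ[K] P) (X Y : P) : P := (2 : K)⁻¹ • (m X Y + m Y X)

/-- the system of the flexibility identity and the identity
`A(X,Y,Z) + A(Y,Z,X) - A(Y,X,Z) = 0` is equivalent to the single identity
`2A(X,Y,Z) + (1/2)A(Y,X,Z) + A(Z,Y,X) + A(Y,Z,X) + (3/2)A(Z,X,Y) = 0`. -/
theorem stmt4 (h2 : (2 : K) ≠ 0) (h3 : (3 : K) ≠ 0)
    (m : P →ₗ[K] P →ₗ[K] P) :
    ((∀ X Y Z : P, assocOf m X Y Z + assocOf m Z Y X = 0) ∧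
      (∀ X Y Z : P, assocOf m X Y Z + assocOf m Y Z X - assocOf m Y X Z = 0)) ↔
      (∀ X Y Z : P,
        (2 : K) • assocOf m X Y Z + ((1 : K) / 2) • assocOf m Y X Z +
          assocOf m Z Y X + assocOf m Y Z X + ((3 : K) / 2) • assocOf m Z X Y = 0) := by
  constructor
  · rintro ⟨hf, hs⟩ X Y Z
    have key : (2 : K) • ((2 : K) • assocOf m X Y Z + ((1 : K) / 2) • assocOf m Y X Z +
        assocOf m Z Y X + assocOf m Y Z X + ((3 : K) / 2) • assocOf m Z X Y) = 0 := by
      linear_combination (norm := match_scalars <;> (field_simp; try ring)) (2 : K) • hs X Y Z + (2 : K) • hf X Y Z +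
        (3 : K) • hf Y X Z
    rcases smul_eq_zero.mp key with h | h
    · exact absurd h h2
    · exact h
  · intro h
    constructor
    · intro X Y Z
      have key : ((6 : K)) • (assocOf m X Y Z + assocOf m Z Y X) = 0 := by
        linear_combination (norm := match_scalars <;> (field_simp; try ring)) (5 : K) • h X Y Z + h X Z Y - (4 : K) • h Z X Y
      rcases smul_eq_zero.mp key with h6 | h6
      · exact absurd h6 (by
          have : (6 : K) = 2 * 3 := by norm_num
          rw [this]; exact mul_ne_zero h2 h3)
      · exact h6
    · intro X Y Z
      have key : ((12 : K)) • (assocOf m X Y Z + assocOf m Y Z X - assocOf m Y X Z) = 0 := by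
        linear_combination (norm := match_scalars <;> (field_simp; try ring)) (11 : K) • h X Y Z + (7 : K) • h X Z Y -
          (12 : K) • h Y X Z - (4 : K) • h Z X Y
      rcases smul_eq_zero.mp key with h12 | h12
      · exact absurd h12 (by
          have : (12 : K) = 2 * 2 * 3 := by norm_num
          rw [this]; exact mul_ne_zero (mul_ne_zero h2 h2) h3)
      · exact h12
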